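/- Let q be a prime power and n ≥ 1. There exist affine subspaces A_1, …, A_m and B_1, …, B_m of F_q^n with m = 2·(q^n − 1)/(q − 1) such that the pair of families {(A_i, B_i) : 1 ≤ i ≤ m} is cross-intersecting, i.e., A_i ∩ B_i = ∅ for each 1 ≤ i ≤ m and A_i ∩ B_j ≠ ∅ whenever 1 ≤ i < j ≤ m. -/

import Mathlib

open Pointwise Matrix

open scoped LinearAlgebra.Projectivization

namespace CrossIntersectAux

variable {F : Type*} [Field F] [Fintype F] {n : ℕ}

/-- The affine hyperplane `{x | a ⬝ᵥ x = c}`. -/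
def S (a : Fin n → F) (c : F) : Set (Fin n → F) := {x | a ⬝ᵥ x = c}

/-- The dot product with `a` as a linear map. -/
def phi (a : Fin n → F) : (Fin n → F) →ₗ[F] F where
  toFun x := a ⬝ᵥ x
  map_add' x y := by simp [dotProduct_add]
  map_smul' t x := by simp [dotProduct_smul]

lemma S_nonempty {a : Fin n → F} (ha : a ≠ 0) (c : F) : (S a c).Nonempty := by
  obtain ⟨k, hk⟩ : ∃ k, a k ≠ 0 := by
    by_contra h
    push_neg at h
    exact ha (funext h)
  refine ⟨Pi.single k (c / a k), ?_⟩
  simp only [S, Set.mem_setOf_eq, dotProduct_single]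
  field_simp

lemma S_affine {a : Fin n → F} (ha : a ≠ 0) (c : F) :
    ∃ (v : Fin n → F) (V : Submodule F (Fin n → F)), S a c = v +ᵥ (V : Set (Fin n → F)) := by
  obtain ⟨v, hv⟩ := S_nonempty ha c
  refine ⟨v, LinearMap.ker (phi a), ?_⟩
  ext x
  simp only [Set.mem_vadd_set_iff_neg_vadd_mem, SetLike.mem_coe, LinearMap.mem_ker, phi,
    LinearMap.coe_mk, AddHom.coe_mk, vadd_eq_add, S, Set.mem_setOf_eq]
  have hv' : a ⬝ᵥ v = c := hv
  rw [dotProduct_add, dotProduct_neg, hv']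
  constructor
  · intro h; linear_combination h
  · intro h; linear_combination h

lemma S_disjoint {a : Fin n → F} {c d : F} (h : c ≠ d) : S a c ∩ S a d = ∅ := by
  ext x
  simp only [S, Set.mem_inter_iff, Set.mem_setOf_eq, Set.mem_empty_iff_false, iff_false]
  rintro ⟨h1, h2⟩
  exact h (h1 ▸ h2)

lemma S_cross {a b : Fin n → F} (ha : a ≠ 0) (hb : b ≠ 0)
    (hab : ∀ t : F, a ≠ t • b) (c d : F) : (S a c ∩ S b d).Nonempty := by
  -- find a nonzero 2×2 minor
  obtain ⟨i, j, hD⟩ : ∃ i j, a i * b j - a j * b i ≠ 0 := by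
    by_contra h
    push_neg at h
    obtain ⟨j0, hj0⟩ : ∃ j0, b j0 ≠ 0 := by
      by_contra h'
      push_neg at h'
      exact hb (funext h')
    refine hab (a j0 / b j0) (funext fun i => ?_)
    have := h i j0
    simp only [Pi.smul_apply, smul_eq_mul]
    field_simp
    linear_combination this
  have hij : i ≠ j := by
    rintro rfl
    exact hD (by ring)
  set D : F := a i * b j - a j * b i with hDdef
  set α : F := (c * b j - d * a j) / D with hα
  set β : F := (d * a i - c * b i) / D with hβ
  refine ⟨Pi.single i α + Pi.single j β, ?_, ?_⟩
  · show a ⬝ᵥ _ = c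
    rw [dotProduct_add, dotProduct_single, dotProduct_single, hα, hβ]
    field_simp
    ring
  · show b ⬝ᵥ _ = d
    rw [dotProduct_add, dotProduct_single, dotProduct_single, hα, hβ]
    field_simp
    ring

/-- Representatives of distinct projective points are not proportional. -/
lemma rep_not_smul {p p' : ℙ F (Fin n → F)} (h : p ≠ p') (t : F) :
    p.rep ≠ t • p'.rep := by
  intro ht
  apply h
  rw [← p.mk_rep, ← p'.mk_rep]
  exact (Projectivization.mk_eq_mk_iff' F _ _ p.rep_nonzero p'.rep_nonzero).2 ⟨t, ht.symm⟩

/-- The cardinality of projective space. -/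
lemma card_proj (hn : 1 ≤ n) :
    Nat.card (ℙ F (Fin n → F)) = (Fintype.card F ^ n - 1) / (Fintype.card F - 1) := by
  classical
  set V := Fin n → F
  -- the equivalence {v // v ≠ 0} ≃ ℙ × Fˣ
  have hbij : Function.Bijective
      (fun pc : (ℙ F V) × Fˣ => (⟨(pc.2 : F) • pc.1.rep,
        smul_ne_zero pc.2.ne_zero pc.1.rep_nonzero⟩ : {v : V // v ≠ 0})) := by
    constructor
    · rintro ⟨p, c⟩ ⟨p', c'⟩ hpc
      simp only [Subtype.mk.injEq] at hpc
      have hp : p = p' := by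
        rw [← p.mk_rep, ← p'.mk_rep]
        refine (Projectivization.mk_eq_mk_iff' F _ _ p.rep_nonzero p'.rep_nonzero).2
          ⟨(c : F)⁻¹ * c', ?_⟩
        rw [mul_smul, ← hpc, ← mul_smul, inv_mul_cancel₀ c.ne_zero,
          one_smul]
      subst hp
      have hc : (c : F) = (c' : F) := by
        have h0 : ((c : F) - c') • p.rep = 0 := by
          rw [sub_smul, hpc, sub_self]
        rcases smul_eq_zero.1 h0 with h | h
        · exact sub_eq_zero.1 h
        · exact absurd h p.rep_nonzero
      exact Prod.ext rfl (Units.ext hc)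
    · rintro ⟨v, hv⟩
      obtain ⟨u, hu⟩ := Projectivization.exists_smul_eq_mk_rep F v hv
      refine ⟨⟨Projectivization.mk F v hv, u⁻¹⟩, ?_⟩
      simp only [Subtype.mk.injEq]
      rw [← hu, Units.smul_def, smul_smul]
      simp
  have hcard : Nat.card {v : V // v ≠ 0} = Nat.card ((ℙ F V) × Fˣ) :=
    (Nat.card_eq_of_bijective _ hbij).symm
  have h1 : Nat.card {v : V // v ≠ 0} = Fintype.card F ^ n - 1 := by
    rw [Nat.card_eq_fintype_card, Fintype.card_subtype_compl, Fintype.card_subtype_eq]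
    simp [V, Fintype.card_fun]
  have h2 : Nat.card ((ℙ F V) × Fˣ) = Nat.card (ℙ F V) * (Nat.card F - 1) := by
    rw [Nat.card_prod, Nat.card_units]
  have h3 : Nat.card F = Fintype.card F := Nat.card_eq_fintype_card
  rw [h3] at h2
  have hq1 : 1 < Fintype.card F := Fintype.one_lt_card
  refine (Nat.div_eq_of_eq_mul_left (by omega) ?_).symm
  rw [h1, h2] at hcard
  exact hcard

end CrossIntersectAux

/-- Theorem 2.2 (construction): for any prime power `q` and `n ≥ 1` there is a
cross-intersecting pair of families of affine subspaces of `F_q^n` of size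
`m = 2·(qⁿ−1)/(q−1)`. -/
theorem exists_affine_cross_intersecting_of_size_two_mul
    {F : Type*} [Field F] [Fintype F] (q n : ℕ)
    (hq : q = Fintype.card F) (hn : 1 ≤ n) :
    ∃ (m : ℕ) (A B : Fin m → Set (Fin n → F)),
      m = 2 * ((q ^ n - 1) / (q - 1)) ∧
      (∀ i, ∃ (v : Fin n → F) (V : Submodule F (Fin n → F)),
        A i = v +ᵥ (V : Set (Fin n → F))) ∧
      (∀ i, ∃ (u : Fin n → F) (U : Submodule F (Fin n → F)),
        B i = u +ᵥ (U : Set (Fin n → F))) ∧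
      (∀ i, A i ∩ B i = ∅) ∧
      (∀ i j, i < j → (A i ∩ B j).Nonempty) := by
  classical
  subst hq
  open CrossIntersectAux Projectivization in
  open scoped LinearAlgebra.Projectivization in
  set P := ℙ F (Fin n → F) with hP
  have : Finite P := Quotient.finite _
  have : Fintype P := Fintype.ofFinite _
  set N : ℕ := (Fintype.card F ^ n - 1) / (Fintype.card F - 1) with hN
  have hcard : Fintype.card P = N := by
    rw [← Nat.card_eq_fintype_card, CrossIntersectAux.card_proj hn]
  obtain e : Fin N ≃ P := (Fintype.equivFinOfCardEq hcard).symm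
  refine ⟨2 * N, ?_, ?_, rfl, ?_, ?_, ?_, ?_⟩
  · exact fun i => S ((e ⟨i.val / 2, by omega⟩).rep) (if i.val % 2 = 0 then 0 else 1)
  · exact fun i => S ((e ⟨i.val / 2, by omega⟩).rep) (if i.val % 2 = 0 then 1 else 0)
  · intro i
    exact S_affine (rep_nonzero _) _
  · intro i
    exact S_affine (rep_nonzero _) _
  · intro i
    by_cases hc : i.val % 2 = 0
    · rw [if_pos hc, if_pos hc]
      exact S_disjoint zero_ne_one
    · rw [if_neg hc, if_neg hc]
      exact S_disjoint one_ne_zero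
  · intro i j hij
    by_cases hk : i.val / 2 = j.val / 2
    · -- same hyperplane: i even, j odd
      have h2 : i.val % 2 = 0 ∧ j.val % 2 = 1 := by omega
      have hkeq : (⟨i.val / 2, by omega⟩ : Fin N) = ⟨j.val / 2, by omega⟩ := by
        simp [hk]
      rw [if_pos h2.1, if_neg (by omega : ¬ j.val % 2 = 0), hkeq, Set.inter_self]
      exact S_nonempty (rep_nonzero _) 0
    · have hne : e ⟨i.val / 2, by omega⟩ ≠ e ⟨j.val / 2, by omega⟩ := by
        intro h
        exact hk (congrArg Fin.val (e.injective h))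
      exact S_cross (rep_nonzero _) (rep_nonzero _)
        (fun t => rep_not_smul hne t) _ _
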